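/- Let p, q, r be distinct primes and let G be a non-abelian solvable group of order p^2 · q^2 · r. Then the intersection graph of subgroups I(G) contains K_5 as a subgraph, i.e., I(G) has a clique on 5 vertices. -/

import Mathlib

open SimpleGraph

/-- The intersection graph of subgroups of a group `G`: vertices are the
nontrivial proper subgroups of `G`, and two distinct vertices are adjacent
iff the corresponding subgroups have nontrivial intersection. -/
def interGraph (G : Type*) [Group G] :
    SimpleGraph {H : Subgroup G // H ≠ ⊥ ∧ H ≠ ⊤} where
  Adj H K := H ≠ K ∧ H.1 ⊓ K.1 ≠ ⊥
  symm := by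
    constructor
    rintro H K ⟨hne, hint⟩
    exact ⟨hne.symm, by rwa [inf_comm] at hint⟩
  loopless := by
    constructor
    rintro H ⟨hne, _⟩
    exact hne rfl

section Aux

lemma two_le_mul {x y : ℕ} (hx : 2 ≤ x) (hy : 1 ≤ y) : 2 ≤ x * y :=
  le_trans hx (Nat.le_mul_of_pos_right _ hy)

lemma ne_mul_big {x c : ℕ} (hx : 1 ≤ x) (hc : 2 ≤ c) : x ≠ x * c := by nlinarith

lemma one_le_mul' {x y : ℕ} (hx : 1 ≤ x) (hy : 1 ≤ y) : 1 ≤ x * y := by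
  simpa using Nat.mul_le_mul hx hy

lemma ne_of_card_ne {K : Type*} [Group K] {X Y : Subgroup K} {x y : ℕ}
    (hx : Nat.card X = x) (hy : Nat.card Y = y) (hxy : x ≠ y) : X ≠ Y :=
  fun h => hxy (by rw [← hx, ← hy, h])

/-- There exist four distinct nontrivial proper subgroups. -/
def HasFour (K : Type*) [Group K] : Prop :=
  ∃ A B C D : Subgroup K,
    (A ≠ B ∧ A ≠ C ∧ A ≠ D ∧ B ≠ C ∧ B ≠ D ∧ C ≠ D) ∧
    (A ≠ ⊥ ∧ B ≠ ⊥ ∧ C ≠ ⊥ ∧ D ≠ ⊥) ∧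
    (A ≠ ⊤ ∧ B ≠ ⊤ ∧ C ≠ ⊤ ∧ D ≠ ⊤)

variable {K : Type*} [Group K] [Finite K]

lemma exists_sub_card {t j : ℕ} (ht : t.Prime) (hd : t ^ j ∣ Nat.card K) :
    ∃ H : Subgroup K, Nat.card H = t ^ j := by
  haveI : Fact t.Prime := ⟨ht⟩
  exact Sylow.exists_subgroup_card_pow_prime t hd

lemma exists_sub_card' {t : ℕ} (ht : t.Prime) (hd : t ∣ Nat.card K) :
    ∃ H : Subgroup K, Nat.card H = t := by
  have := exists_sub_card (K := K) (j := 1) ht (by simpa using hd)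
  simpa using this

lemma ne_bot_card {H : Subgroup K} {n : ℕ} (h : Nat.card H = n) (h1 : n ≠ 1) : H ≠ ⊥ := by
  intro hb
  subst hb
  rw [Subgroup.card_bot] at h
  exact h1 h.symm

lemma ne_top_card {H : Subgroup K} {n : ℕ} (h : Nat.card H = n) (h1 : n ≠ Nat.card K) :
    H ≠ ⊤ := by
  intro ht
  subst ht
  rw [Subgroup.card_top] at h
  exact h1 h.symm

lemma hasFour_of_cards {a b c d : ℕ}
    (eA : ∃ H : Subgroup K, Nat.card H = a) (eB : ∃ H : Subgroup K, Nat.card H = b)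
    (eC : ∃ H : Subgroup K, Nat.card H = c) (eD : ∃ H : Subgroup K, Nat.card H = d)
    (hab : a ≠ b) (hac : a ≠ c) (had : a ≠ d) (hbc : b ≠ c) (hbd : b ≠ d) (hcd : c ≠ d)
    (ha1 : a ≠ 1) (hb1 : b ≠ 1) (hc1 : c ≠ 1) (hd1 : d ≠ 1)
    (haK : a ≠ Nat.card K) (hbK : b ≠ Nat.card K) (hcK : c ≠ Nat.card K)
    (hdK : d ≠ Nat.card K) : HasFour K := by
  obtain ⟨A, hA⟩ := eA
  obtain ⟨B, hB⟩ := eB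
  obtain ⟨C, hC⟩ := eC
  obtain ⟨D, hD⟩ := eD
  have key : ∀ (X Y : Subgroup K) {x y : ℕ}, Nat.card X = x → Nat.card Y = y → x ≠ y →
      X ≠ Y := by
    intro X Y x y hx hy hxy h
    exact hxy (by rw [← hx, ← hy, h])
  exact ⟨A, B, C, D,
    ⟨key A B hA hB hab, key A C hA hC hac, key A D hA hD had,
     key B C hB hC hbc, key B D hB hD hbd, key C D hC hD hcd⟩,
    ⟨ne_bot_card hA ha1, ne_bot_card hB hb1, ne_bot_card hC hc1, ne_bot_card hD hd1⟩,
    ⟨ne_top_card hA haK, ne_top_card hB hbK, ne_top_card hC hcK, ne_top_card hD hdK⟩⟩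

lemma sq_ne_prime {a b : ℕ} (ha : a.Prime) (hb : b.Prime) (hab : a ≠ b) : a ^ 2 ≠ b := by
  intro h
  exact hab ((Nat.prime_dvd_prime_iff_eq ha hb).mp (h ▸ dvd_pow_self a two_ne_zero))

/-- A group of order `a²b²` (distinct primes) has four distinct nontrivial proper subgroups. -/
lemma hasFour_a2b2 {a b : ℕ} (ha : a.Prime) (hb : b.Prime) (hab : a ≠ b)
    (hm : Nat.card K = a ^ 2 * b ^ 2) : HasFour K := by
  have ha2 := ha.two_le
  have hb2 := hb.two_le
  have ha1 : (1:ℕ) ≤ a := by omega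
  have hb1 : (1:ℕ) ≤ b := by omega
  refine hasFour_of_cards (a := a) (b := a ^ 2) (c := b) (d := b ^ 2)
    (exists_sub_card' ha ⟨a * b ^ 2, by rw [hm]; ring⟩)
    (exists_sub_card ha ⟨b ^ 2, by rw [hm]⟩)
    (exists_sub_card' hb ⟨a ^ 2 * b, by rw [hm]; ring⟩)
    (exists_sub_card hb ⟨a ^ 2, by rw [hm]; ring⟩)
    (by rw [show a ^ 2 = a * a by ring]; exact ne_mul_big ha1 ha2)
    hab (fun h => (sq_ne_prime hb ha hab.symm) h.symm)
    (sq_ne_prime ha hb hab)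
    (fun h => hab (Nat.pow_left_injective (by norm_num) h))
    (by rw [show b ^ 2 = b * b by ring]; exact ne_mul_big hb1 hb2)
    ha.ne_one (Nat.one_lt_pow (by norm_num) ha.one_lt).ne' hb.ne_one
    (Nat.one_lt_pow (by norm_num) hb.one_lt).ne'
    (by rw [hm, show a ^ 2 * b ^ 2 = a * (a * (b * b)) by ring]
        exact ne_mul_big ha1 (two_le_mul ha2 (one_le_mul' hb1 hb1)))
    (by rw [hm, show a ^ 2 * b ^ 2 = a ^ 2 * (b * b) by ring]
        exact ne_mul_big (Nat.one_le_pow 2 a (by omega)) (two_le_mul hb2 hb1))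
    (by rw [hm, show a ^ 2 * b ^ 2 = b * (a * (a * b)) by ring]
        exact ne_mul_big hb1 (two_le_mul ha2 (one_le_mul' ha1 hb1)))
    (by rw [hm, show a ^ 2 * b ^ 2 = b ^ 2 * (a * a) by ring]
        exact ne_mul_big (Nat.one_le_pow 2 b (by omega)) (two_le_mul ha2 ha1))

/-- A group of order `u²vw` (distinct primes) has four distinct nontrivial proper subgroups. -/
lemma hasFour_u2vw {u v w : ℕ} (hu : u.Prime) (hv : v.Prime) (hw : w.Prime)
    (huv : u ≠ v) (huw : u ≠ w) (hvw : v ≠ w)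
    (hm : Nat.card K = u ^ 2 * v * w) : HasFour K := by
  have hu2 := hu.two_le
  have hv2 := hv.two_le
  have hw2 := hw.two_le
  have hu1 : (1:ℕ) ≤ u := by omega
  have hv1 : (1:ℕ) ≤ v := by omega
  have hw1 : (1:ℕ) ≤ w := by omega
  refine hasFour_of_cards (a := u) (b := u ^ 2) (c := v) (d := w)
    (exists_sub_card' hu ⟨u * v * w, by rw [hm]; ring⟩)
    (exists_sub_card hu ⟨v * w, by rw [hm]; ring⟩)
    (exists_sub_card' hv ⟨u ^ 2 * w, by rw [hm]; ring⟩)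
    (exists_sub_card' hw ⟨u ^ 2 * v, by rw [hm]; ring⟩)
    (by rw [show u ^ 2 = u * u by ring]; exact ne_mul_big hu1 hu2)
    huv huw (sq_ne_prime hu hv huv) (sq_ne_prime hu hw huw) hvw
    hu.ne_one (Nat.one_lt_pow (by norm_num) hu.one_lt).ne' hv.ne_one hw.ne_one
    (by rw [hm, show u ^ 2 * v * w = u * (u * (v * w)) by ring]
        exact ne_mul_big hu1 (two_le_mul hu2 (one_le_mul' hv1 hw1)))
    (by rw [hm, show u ^ 2 * v * w = u ^ 2 * (v * w) by ring]
        exact ne_mul_big (Nat.one_le_pow 2 u (by omega)) (two_le_mul hv2 hw1))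
    (by rw [hm, show u ^ 2 * v * w = v * (u * (u * w)) by ring]
        exact ne_mul_big hv1 (two_le_mul hu2 (one_le_mul' hu1 hw1)))
    (by rw [hm, show u ^ 2 * v * w = w * (u * (u * v)) by ring]
        exact ne_mul_big hw1 (two_le_mul hu2 (one_le_mul' hu1 hv1)))

/-- A group of order `a²b` (distinct primes) has four distinct nontrivial proper subgroups. -/
lemma hasFour_a2b {a b : ℕ} (ha : a.Prime) (hb : b.Prime) (hab : a ≠ b)
    (hm : Nat.card K = a ^ 2 * b) : HasFour K := by
  haveI : Fact a.Prime := ⟨ha⟩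
  haveI : Fact b.Prime := ⟨hb⟩
  have ha2 := ha.two_le
  have hb2 := hb.two_le
  obtain ⟨P₁, hP₁⟩ := exists_sub_card' (K := K) ha ⟨a * b, by rw [hm]; ring⟩
  obtain ⟨P₂, hP₂⟩ := exists_sub_card (K := K) ha ⟨b, by rw [hm]⟩
  obtain ⟨R⟩ : Nonempty (Sylow b K) := inferInstance
  have hfact : (Nat.card K).factorization b = 1 := by
    rw [hm, Nat.factorization_mul (by positivity) hb.pos.ne', Nat.factorization_pow,
      ha.factorization, hb.factorization]
    simp [Finsupp.single_apply, hab]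
  have hRcard : Nat.card R = b := by
    rw [R.card_eq_multiplicity, hfact, pow_one]
  -- numeric distinctness facts
  have ha1 : (1:ℕ) ≤ a := by omega
  have hb1 : (1:ℕ) ≤ b := by omega
  have haa2 : a ≠ a ^ 2 := by
    rw [show a ^ 2 = a * a by ring]; exact ne_mul_big ha1 ha2
  have hKa : a ≠ a ^ 2 * b := by
    rw [show a ^ 2 * b = a * (a * b) by ring]
    exact ne_mul_big ha1 (two_le_mul ha2 hb1)
  have hKa2 : a ^ 2 ≠ a ^ 2 * b := ne_mul_big (Nat.one_le_pow 2 a (by omega)) hb2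
  have hKb : b ≠ a ^ 2 * b := by
    rw [show a ^ 2 * b = b * (a * a) by ring]
    exact ne_mul_big hb1 (two_le_mul ha2 ha1)
  have ha2b : a ^ 2 ≠ b := sq_ne_prime ha hb hab
  by_cases huniq : ∀ Q : Sylow b K, Q = R
  · -- the Sylow b-subgroup is normal
    have hnorm : (R : Subgroup K).Normal := by
      rw [← Subgroup.normalizer_eq_top_iff, Subgroup.eq_top_iff']
      intro g
      exact Sylow.smul_eq_iff_mem_normalizer.mp (huniq (g • R))
    haveI := hnorm
    set π := QuotientGroup.mk' (R : Subgroup K) with hπ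
    have hsurj : Function.Surjective π := QuotientGroup.mk'_surjective (R : Subgroup K)
    have hker : π.ker = (R : Subgroup K) := QuotientGroup.ker_mk' (R : Subgroup K)
    have hqcard : Nat.card (K ⧸ (R : Subgroup K)) = a ^ 2 := by
      have h2 := Subgroup.card_eq_card_quotient_mul_card_subgroup (R : Subgroup K)
      rw [hm, hRcard] at h2
      exact (Nat.eq_of_mul_eq_mul_right hb.pos h2.symm)
    obtain ⟨Y, hY⟩ := exists_sub_card' (K := K ⧸ (R : Subgroup K)) ha
      ⟨a, by rw [hqcard]; ring⟩
    set D := Y.comap π with hD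
    have hRD : (R : Subgroup K) ≤ D := hker ▸ Subgroup.ker_le_comap π Y
    have hbD : b ∣ Nat.card D := hRcard ▸ Subgroup.card_dvd_of_le hRD
    have hinj : Function.Injective (Subgroup.comap π) := Subgroup.comap_injective hsurj
    refine ⟨P₁, P₂, (R : Subgroup K), D, ⟨?_, ?_, ?_, ?_, ?_, ?_⟩, ⟨?_, ?_, ?_, ?_⟩,
      ⟨?_, ?_, ?_, ?_⟩⟩
    · exact ne_of_card_ne hP₁ hP₂ haa2
    · exact ne_of_card_ne hP₁ hRcard hab
    · -- P₁ ≠ D : since b ∣ card D but b ∤ a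
      intro h
      rw [← h, hP₁] at hbD
      exact hab ((Nat.prime_dvd_prime_iff_eq hb ha).mp hbD).symm
    · exact ne_of_card_ne hP₂ hRcard ha2b
    · -- P₂ ≠ D : b ∣ card D = a² → b ∣ a
      intro h
      rw [← h, hP₂] at hbD
      exact hab (((Nat.prime_dvd_prime_iff_eq hb ha).mp (hb.dvd_of_dvd_pow hbD))).symm
    · -- R ≠ D : comap injectivity
      intro h
      have : (⊥ : Subgroup (K ⧸ (R : Subgroup K))).comap π = Y.comap π := by
        rw [MonoidHom.comap_bot, hker, ← hD, h]
      have := hinj this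
      rw [← this] at hY
      rw [Subgroup.card_bot] at hY
      exact ha.ne_one hY.symm
    · exact ne_bot_card hP₁ ha.ne_one
    · exact ne_bot_card hP₂ (Nat.one_lt_pow (by norm_num) ha.one_lt).ne'
    · exact ne_bot_card hRcard hb.ne_one
    · intro h
      exact (ne_bot_card hRcard hb.ne_one) (le_bot_iff.mp (h ▸ hRD))
    · exact ne_top_card hP₁ (by rw [hm]; exact hKa)
    · exact ne_top_card hP₂ (by rw [hm]; exact hKa2)
    · exact ne_top_card hRcard (by rw [hm]; exact hKb)
    · -- D ≠ ⊤
      intro h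
      have : Y.comap π = (⊤ : Subgroup (K ⧸ (R : Subgroup K))).comap π := by
        rw [Subgroup.comap_top, ← hD, h]
      have hYt := hinj this
      rw [hYt, Subgroup.card_top, hqcard] at hY
      exact haa2 hY.symm
  · push_neg at huniq
    obtain ⟨R', hR'⟩ := huniq
    have hR'card : Nat.card R' = b := by
      rw [R'.card_eq_multiplicity, hfact, pow_one]
    refine ⟨P₁, P₂, (R : Subgroup K), (R' : Subgroup K), ⟨?_, ?_, ?_, ?_, ?_, ?_⟩,
      ⟨?_, ?_, ?_, ?_⟩, ⟨?_, ?_, ?_, ?_⟩⟩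
    · exact ne_of_card_ne hP₁ hP₂ haa2
    · exact ne_of_card_ne hP₁ hRcard hab
    · exact ne_of_card_ne hP₁ hR'card hab
    · exact ne_of_card_ne hP₂ hRcard ha2b
    · exact ne_of_card_ne hP₂ hR'card ha2b
    · exact fun h => hR' (Sylow.ext h.symm)
    · exact ne_bot_card hP₁ ha.ne_one
    · exact ne_bot_card hP₂ (Nat.one_lt_pow (by norm_num) ha.one_lt).ne'
    · exact ne_bot_card hRcard hb.ne_one
    · exact ne_bot_card hR'card hb.ne_one
    · exact ne_top_card hP₁ (by rw [hm]; exact hKa)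
    · exact ne_top_card hP₂ (by rw [hm]; exact hKa2)
    · exact ne_top_card hRcard (by rw [hm]; exact hKb)
    · exact ne_top_card hR'card (by rw [hm]; exact hKb)

end Aux

/-- Helper: the last nonbottom stage of a decreasing-to-⊥ sequence. -/
lemma exists_last_stage (P : ℕ → Prop) (h0 : ¬ P 0) {n : ℕ} (hn : P n) :
    ∃ k, P (k + 1) ∧ ¬ P k := by
  induction n with
  | zero => exact absurd hn h0
  | succ m ih =>
    by_cases h : P m
    · exact ih h
    · exact ⟨m, hn, h⟩

/-- Main assembly: a nontrivial proper normal subgroup `M` such that `G ⧸ M` has four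
distinct nontrivial proper subgroups yields a 5-clique in the intersection graph. -/
lemma clique_of_normal {G : Type*} [Group G] (M : Subgroup G) [hMn : M.Normal]
    (hMb : M ≠ ⊥) (hMt : M ≠ ⊤) (h4 : HasFour (G ⧸ M)) :
    ∃ s, (interGraph G).IsNClique 5 s := by
  classical
  obtain ⟨A, B, C, D, ⟨hAB, hAC, hAD, hBC, hBD, hCD⟩, ⟨hAb, hBb, hCb, hDb⟩,
    ⟨hAt, hBt, hCt, hDt⟩⟩ := h4
  set π := QuotientGroup.mk' M with hπ
  have hsurj : Function.Surjective π := QuotientGroup.mk'_surjective M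
  have hker : π.ker = M := QuotientGroup.ker_mk' M
  have hinj : Function.Injective (Subgroup.comap π) := Subgroup.comap_injective hsurj
  have hMle : ∀ X : Subgroup (G ⧸ M), M ≤ X.comap π := fun X =>
    hker.symm.trans_le (Subgroup.ker_le_comap π X)
  have hMeq : (⊥ : Subgroup (G ⧸ M)).comap π = M := by rw [MonoidHom.comap_bot, hker]
  have hbot : ∀ X : Subgroup (G ⧸ M), X.comap π ≠ ⊥ :=
    fun X h => hMb (le_bot_iff.mp (h ▸ hMle X))
  have htop : ∀ X : Subgroup (G ⧸ M), X ≠ ⊤ → X.comap π ≠ ⊤ := by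
    intro X hX h
    exact hX (hinj (by rw [h, Subgroup.comap_top]))
  have key : ∀ X Y : Subgroup (G ⧸ M), X ≠ Y → X.comap π ≠ Y.comap π :=
    fun X Y h hc => h (hinj hc)
  set v0 : {H : Subgroup G // H ≠ ⊥ ∧ H ≠ ⊤} := ⟨M, hMb, hMt⟩ with hv0
  set v1 : {H : Subgroup G // H ≠ ⊥ ∧ H ≠ ⊤} := ⟨A.comap π, hbot A, htop A hAt⟩ with hv1
  set v2 : {H : Subgroup G // H ≠ ⊥ ∧ H ≠ ⊤} := ⟨B.comap π, hbot B, htop B hBt⟩ with hv2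
  set v3 : {H : Subgroup G // H ≠ ⊥ ∧ H ≠ ⊤} := ⟨C.comap π, hbot C, htop C hCt⟩ with hv3
  set v4 : {H : Subgroup G // H ≠ ⊥ ∧ H ≠ ⊤} := ⟨D.comap π, hbot D, htop D hDt⟩ with hv4
  have e01 : M ≠ A.comap π := fun h => key ⊥ A (Ne.symm hAb) (hMeq.trans h)
  have e02 : M ≠ B.comap π := fun h => key ⊥ B (Ne.symm hBb) (hMeq.trans h)
  have e03 : M ≠ C.comap π := fun h => key ⊥ C (Ne.symm hCb) (hMeq.trans h)
  have e04 : M ≠ D.comap π := fun h => key ⊥ D (Ne.symm hDb) (hMeq.trans h)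
  have e12 := key A B hAB
  have e13 := key A C hAC
  have e14 := key A D hAD
  have e23 := key B C hBC
  have e24 := key B D hBD
  have e34 := key C D hCD
  have h01 : v0 ≠ v1 := fun h => e01 (congrArg Subtype.val h)
  have h02 : v0 ≠ v2 := fun h => e02 (congrArg Subtype.val h)
  have h03 : v0 ≠ v3 := fun h => e03 (congrArg Subtype.val h)
  have h04 : v0 ≠ v4 := fun h => e04 (congrArg Subtype.val h)
  have h12 : v1 ≠ v2 := fun h => e12 (congrArg Subtype.val h)
  have h13 : v1 ≠ v3 := fun h => e13 (congrArg Subtype.val h)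
  have h14 : v1 ≠ v4 := fun h => e14 (congrArg Subtype.val h)
  have h23 : v2 ≠ v3 := fun h => e23 (congrArg Subtype.val h)
  have h24 : v2 ≠ v4 := fun h => e24 (congrArg Subtype.val h)
  have h34 : v3 ≠ v4 := fun h => e34 (congrArg Subtype.val h)
  refine ⟨{v0, v1, v2, v3, v4}, ?_, ?_⟩
  · -- clique
    intro x hx y hy hxy
    refine ⟨hxy, ?_⟩
    have hsub : ∀ z : {H : Subgroup G // H ≠ ⊥ ∧ H ≠ ⊤},
        z ∈ ({v0, v1, v2, v3, v4} : Finset _) → M ≤ z.1 := by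
      intro z hz
      simp only [Finset.mem_insert, Finset.mem_singleton] at hz
      rcases hz with rfl | rfl | rfl | rfl | rfl
      · exact le_rfl
      · exact hMle A
      · exact hMle B
      · exact hMle C
      · exact hMle D
    intro h
    have hx' : x ∈ ({v0, v1, v2, v3, v4} : Finset _) := hx
    have hy' : y ∈ ({v0, v1, v2, v3, v4} : Finset _) := hy
    exact hMb (le_bot_iff.mp (h ▸ le_inf (hsub x hx') (hsub y hy')))
  · -- cardinality
    rw [Finset.card_insert_of_notMem (by
      simp only [Finset.mem_insert, Finset.mem_singleton]
      push_neg
      exact ⟨h01, h02, h03, h04⟩)]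
    rw [Finset.card_insert_of_notMem (by
      simp only [Finset.mem_insert, Finset.mem_singleton]
      push_neg
      exact ⟨h12, h13, h14⟩)]
    rw [Finset.card_insert_of_notMem (by
      simp only [Finset.mem_insert, Finset.mem_singleton]
      push_neg
      exact ⟨h23, h24⟩)]
    rw [Finset.card_insert_of_notMem (by
      simp only [Finset.mem_singleton]
      exact h34)]
    rw [Finset.card_singleton]

theorem intersectionGraph_has_K5_of_nonabelian_solvable_p2q2r
    (p q r : ℕ) (hp : p.Prime) (hq : q.Prime) (hr : r.Prime)
    (hpq : p ≠ q) (hpr : p ≠ r) (hqr : q ≠ r)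
    (G : Type*) [Group G] [Group.IsSolvable G] (hcard : Nat.card G = p ^ 2 * q ^ 2 * r)
    (hna : ¬ ∀ a b : G, a * b = b * a) :
    ∃ s, (interGraph G).IsNClique 5 s := by
  have hp2 := hp.two_le
  have hq2 := hq.two_le
  have hr2 := hr.two_le
  haveI : Finite G := Nat.finite_of_card_ne_zero (by rw [hcard]; positivity)
  have hG1 : 1 < Nat.card G := by
    rw [hcard, show p ^ 2 * q ^ 2 * r = p ^ 2 * (q ^ 2 * r) by ring]
    have h1 : 2 ≤ p ^ 2 := le_trans hp2 (Nat.le_self_pow (by norm_num) p)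
    have h2 : 1 ≤ q ^ 2 * r := one_le_mul' (Nat.one_le_pow 2 q (by omega)) (by omega)
    exact lt_of_lt_of_le one_lt_two (two_le_mul h1 h2)
  -- last nontrivial stage of the derived series
  obtain ⟨n₀, hn₀⟩ : ∃ n, derivedSeries G n = ⊥ := Group.IsSolvable.solvable
  have h0 : ¬ derivedSeries G 0 = ⊥ := by
    rw [derivedSeries_zero]
    intro h
    have h1 := Subgroup.card_top (G := G)
    rw [h, Subgroup.card_bot] at h1
    omega
  obtain ⟨k, hk1, hk0⟩ := exists_last_stage (fun i => derivedSeries G i = ⊥) h0 hn₀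
  set N := derivedSeries G k with hN
  haveI hNnorm : N.Normal := derivedSeries_normal G k
  rw [derivedSeries_succ] at hk1
  have hle : N ≤ Subgroup.centralizer N := Subgroup.commutator_eq_bot_iff_le_centralizer.mp hk1
  have hcommN : ∀ x y : G, x ∈ N → y ∈ N → x * y = y * x := by
    intro x y hx hy
    exact Subgroup.mem_centralizer_iff.mp (hle hy) x hx
  have hNb : N ≠ ⊥ := hk0
  have hNcard1 : Nat.card N ≠ 1 := fun h => hNb (Subgroup.card_eq_one.mp h)
  set s := (Nat.card N).minFac with hs
  have hsp : s.Prime := Nat.minFac_prime hNcard1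
  haveI : Fact s.Prime := ⟨hsp⟩
  obtain ⟨P⟩ : Nonempty (Sylow s ↥N) := inferInstance
  have hPnormal : (P : Subgroup ↥N).Normal := by
    constructor
    intro x hx g
    have hgx : g * x * g⁻¹ = x := by
      apply Subtype.ext
      push_cast
      have := hcommN (g : G) (x : G) g.2 x.2
      rw [this]
      group
    rw [hgx]
    exact hx
  haveI := hPnormal
  haveI hPchar : (P : Subgroup ↥N).Characteristic := Sylow.characteristic_of_normal P hPnormal
  set M := (P : Subgroup ↥N).map N.subtype with hM
  haveI hMnormal : M.Normal := inferInstance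
  have hMcard : Nat.card M = Nat.card P :=
    (Nat.card_congr ((P : Subgroup ↥N).equivMapOfInjective N.subtype
      N.subtype_injective).toEquiv).symm
  obtain ⟨j, hj⟩ : ∃ j, Nat.card P = s ^ j := IsPGroup.iff_card.mp P.isPGroup'
  have hsP : s ∣ Nat.card P := P.dvd_card_of_dvd_card (Nat.minFac_dvd _)
  have hj1 : 1 ≤ j := by
    by_contra h
    push_neg at h
    interval_cases j
    rw [hj, pow_zero, Nat.dvd_one] at hsP
    exact hsp.ne_one hsP
  have hMc : Nat.card M = s ^ j := hMcard.trans hj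
  have hMb : M ≠ ⊥ := ne_bot_card hMc (by
    intro h
    exact hsp.ne_one ((pow_eq_one_iff.mp h).resolve_right (by omega : j ≠ 0)))
  have hquot := Subgroup.card_eq_card_quotient_mul_card_subgroup M
  set m := Nat.card (G ⧸ M) with hm
  rw [hcard, hMc] at hquot
  -- hquot : p^2*q^2*r = m * s^j
  have hsjdvd : s ^ j ∣ p ^ 2 * q ^ 2 * r := ⟨m, by rw [hquot]; ring⟩
  have hMt : M ≠ ⊤ := by
    intro h
    rw [h, Subgroup.card_top, hcard] at hMc
    have hpdvd : p ∣ s ^ j := hMc ▸ ⟨p * q ^ 2 * r, by ring⟩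
    have hqdvd : q ∣ s ^ j := hMc ▸ ⟨p ^ 2 * q * r, by ring⟩
    have hps : p = s := (Nat.prime_dvd_prime_iff_eq hp hsp).mp (hp.dvd_of_dvd_pow hpdvd)
    have hqs : q = s := (Nat.prime_dvd_prime_iff_eq hq hsp).mp (hq.dvd_of_dvd_pow hqdvd)
    exact hpq (hps.trans hqs.symm)
  have hsdvd : s ∣ p ^ 2 * q ^ 2 * r :=
    dvd_trans (dvd_pow_self s (by omega)) hsjdvd
  have hcases : s = p ∨ s = q ∨ s = r := by
    rcases (Nat.Prime.dvd_mul hsp).mp hsdvd with h | h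
    · rcases (Nat.Prime.dvd_mul hsp).mp h with h' | h'
      · exact Or.inl ((Nat.prime_dvd_prime_iff_eq hsp hp).mp (hsp.dvd_of_dvd_pow h'))
      · exact Or.inr (Or.inl ((Nat.prime_dvd_prime_iff_eq hsp hq).mp (hsp.dvd_of_dvd_pow h')))
    · exact Or.inr (Or.inr ((Nat.prime_dvd_prime_iff_eq hsp hr).mp h))
  -- a helper to bound j
  have hbound : ∀ {u v w : ℕ}, u.Prime → v.Prime → w.Prime → u ≠ v → u ≠ w →
      s = u → s ^ j ∣ u ^ 2 * (v ^ 2 * w) → j ≤ 2 := by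
    intro u v w hu hv hw huv huw hsu hdvd
    subst hsu
    have hc : (s ^ j).Coprime (v ^ 2 * w) := by
      refine Nat.Coprime.pow_left _ (Nat.Coprime.mul_right ?_ ?_)
      · exact Nat.Coprime.pow_right _ ((Nat.coprime_primes hu hv).mpr huv)
      · exact (Nat.coprime_primes hu hw).mpr huw
    have : s ^ j ∣ s ^ 2 := hc.dvd_of_dvd_mul_right hdvd
    exact (Nat.pow_dvd_pow_iff_le_right hu.one_lt).mp this
  have h4 : HasFour (G ⧸ M) := by
    rcases hcases with hsv | hsv | hsv
    · -- s = p
      have hj2 : j ≤ 2 := hbound hp hq hr hpq hpr hsv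
        (by rw [show p ^ 2 * (q ^ 2 * r) = p ^ 2 * q ^ 2 * r by ring]; exact hsjdvd)
      rw [hsv] at hquot
      interval_cases j
      · have hx : m * p ^ 1 = (p * q ^ 2 * r) * p ^ 1 := by rw [← hquot]; ring
        have hmval := Nat.eq_of_mul_eq_mul_right (pow_pos hp.pos 1) hx
        exact hasFour_u2vw hq hp hr (Ne.symm hpq) hqr hpr (by rw [← hm, hmval]; try ring)
      · have hx : m * p ^ 2 = (q ^ 2 * r) * p ^ 2 := by rw [← hquot]; ring
        have hmval := Nat.eq_of_mul_eq_mul_right (pow_pos hp.pos 2) hx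
        exact hasFour_a2b hq hr hqr (by rw [← hm, hmval])
    · -- s = q
      have hj2 : j ≤ 2 := hbound hq hp hr (Ne.symm hpq) hqr hsv
        (by rw [show q ^ 2 * (p ^ 2 * r) = p ^ 2 * q ^ 2 * r by ring]; exact hsjdvd)
      rw [hsv] at hquot
      interval_cases j
      · have hx : m * q ^ 1 = (p ^ 2 * q * r) * q ^ 1 := by rw [← hquot]; ring
        have hmval := Nat.eq_of_mul_eq_mul_right (pow_pos hq.pos 1) hx
        exact hasFour_u2vw hp hq hr hpq hpr hqr (by rw [← hm, hmval]; try ring)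
      · have hx : m * q ^ 2 = (p ^ 2 * r) * q ^ 2 := by rw [← hquot]; ring
        have hmval := Nat.eq_of_mul_eq_mul_right (pow_pos hq.pos 2) hx
        exact hasFour_a2b hp hr hpr (by rw [← hm, hmval])
    · -- s = r
      have hj2 : j ≤ 1 := by
        have hc : (s ^ j).Coprime (p ^ 2 * q ^ 2) := by
          rw [hsv]
          refine Nat.Coprime.pow_left _ (Nat.Coprime.mul_right ?_ ?_)
          · exact Nat.Coprime.pow_right _ ((Nat.coprime_primes hr hp).mpr (Ne.symm hpr))
          · exact Nat.Coprime.pow_right _ ((Nat.coprime_primes hr hq).mpr (Ne.symm hqr))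
        have hd : s ^ j ∣ s ^ 1 := by
          refine hc.dvd_of_dvd_mul_right ?_
          rw [hsv, show r ^ 1 * (p ^ 2 * q ^ 2) = p ^ 2 * q ^ 2 * r by ring]
          rw [hsv] at hsjdvd
          exact hsjdvd
        exact (Nat.pow_dvd_pow_iff_le_right hsp.one_lt).mp hd
      rw [hsv] at hquot
      interval_cases j
      have hx : m * r ^ 1 = (p ^ 2 * q ^ 2) * r ^ 1 := by rw [← hquot]; ring
      have hmval := Nat.eq_of_mul_eq_mul_right (pow_pos hr.pos 1) hx
      exact hasFour_a2b2 hp hq hpq (by rw [← hm, hmval])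
  exact clique_of_normal M hMb hMt h4
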